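/- Let X be an infinite-dimensional real Banach space and let (A_n) be an approximation scheme in X such that A_n + A_n ⊆ A_{c·n} for all n ≥ 1, for some integer c ≥ 2. The following are equivalent: (a) (X,(A_n)) satisfies Shapiro's Theorem; (b) for every r > 0 there exists x ∈ X such that sup_{n≥1} n^r · E(x, A_n) = ∞; (c) for some r > 0 there exists x ∈ X such that sup_{n≥1} n^r · E(x, A_n) = ∞; (d) for every r > 0 the set A_∞^r = { x ∈ X : sup_{n≥0} (n+1)^r · E(x, A_n) < ∞ } is a proper subset of X; (e) for some r > 0 the set A_∞^r is a proper subset of X. -/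

import Mathlib

open Metric Filter Pointwise
set_option linter.unusedSectionVars false
set_option maxHeartbeats 1000000

/-- `(A n)` together with the map `K` is an approximation scheme in `X`. -/
structure IsApproximationScheme {X : Type*} [NormedAddCommGroup X] [NormedSpace ℝ X]
    (A : ℕ → Set X) (K : ℕ → ℕ) : Prop where
  subset_succ : ∀ n, A n ⊆ A (n + 1)
  ne_succ : ∀ n, A n ≠ A (n + 1)
  le_K : ∀ n, n ≤ K n
  add_mem : ∀ n, ∀ x ∈ A n, ∀ y ∈ A n, x + y ∈ A (K n)
  smul_mem : ∀ n (c : ℝ), ∀ x ∈ A n, c • x ∈ A n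
  dense_union : Dense (⋃ n, A n)

/-- `(X, (A n))` satisfies Shapiro's Theorem: for every nonincreasing positive sequence
`ε` converging to `0` there is `x` with `E(x, A n) ≠ O(ε n)`. -/
def SatisfiesShapiro {X : Type*} [NormedAddCommGroup X] (A : ℕ → Set X) : Prop :=
  ∀ ε : ℕ → ℝ, (∀ n, 0 < ε n) → Antitone ε → Tendsto ε atTop (nhds 0) →
    ∃ x : X, ¬ ∃ M : ℝ, ∀ n, infDist x (A n) ≤ M * ε n

/-- `E(B, A) = sup_{b ∈ B} E(b, A)`. -/
noncomputable def setApproxError {X : Type*} [NormedAddCommGroup X] (B A : Set X) : ℝ :=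
  ⨆ b : B, infDist (b : X) A

/-- `dens_n`-style quantity: `E(S(X), A) = sup_{‖x‖ = 1} E(x, A)`. -/
noncomputable def sphDist {X : Type*} [NormedAddCommGroup X] (A : Set X) : ℝ :=
  ⨆ x : {x : X // ‖x‖ = 1}, infDist (x : X) A

section Aux

variable {X : Type*} [NormedAddCommGroup X] [NormedSpace ℝ X]

/-- translated infDist bound -/
lemma aux_infDist_translate {S T : Set X} (hS : S.Nonempty) {a : X}
    (h : ∀ b ∈ S, a + b ∈ T) (x : X) :
    infDist x T ≤ infDist (x - a) S := by
  by_contra hlt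
  push_neg at hlt
  obtain ⟨b, hb, hd⟩ := (infDist_lt_iff hS).1 hlt
  have h1 : infDist x T ≤ dist x (a + b) := infDist_le_dist_of_mem (h b hb)
  have h2 : dist x (a + b) = dist (x - a) b := by
    rw [dist_eq_norm, dist_eq_norm]
    congr 1
    abel
  linarith

/-- homogeneity -/
lemma aux_infDist_smul {S : Set X} (hsm : ∀ (t : ℝ), ∀ y ∈ S, t • y ∈ S)
    {t : ℝ} (ht : t ≠ 0) (y : X) :
    infDist (t • y) S = |t| * infDist y S := by
  have hset : t • S = S := by
    apply Set.Subset.antisymm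
    · rintro _ ⟨z, hz, rfl⟩; exact hsm t z hz
    · intro z hz
      exact ⟨t⁻¹ • z, hsm t⁻¹ z hz, by simp [smul_smul, mul_inv_cancel₀ ht]⟩
  calc infDist (t • y) S = infDist (t • y) (t • S) := by rw [hset]
    _ = ‖t‖ * infDist y S := infDist_smul₀ ht S y
    _ = |t| * infDist y S := by rw [Real.norm_eq_abs]

/-- subadditivity across levels -/
lemma aux_infDist_add {S T U : Set X} (hS : S.Nonempty) (hT : T.Nonempty)
    (h : ∀ a ∈ S, ∀ b ∈ T, a + b ∈ U) (u v : X) :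
    infDist (u + v) U ≤ infDist u S + infDist v T := by
  refine le_of_forall_pos_le_add fun θ hθ => ?_
  obtain ⟨a, ha, hda⟩ := (infDist_lt_iff hS).1
    (show infDist u S < infDist u S + θ/2 by linarith)
  obtain ⟨b, hb, hdb⟩ := (infDist_lt_iff hT).1
    (show infDist v T < infDist v T + θ/2 by linarith)
  have h1 : infDist (u + v) U ≤ dist (u + v) (a + b) := infDist_le_dist_of_mem (h a ha b hb)
  have h2 : dist (u + v) (a + b) ≤ dist u a + dist v b := dist_add_add_le_of_le le_rfl le_rfl
  linarith

/-- The hard implication: if for some `r > 0` the quantity `n^r E(x, A n)` is unbounded for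
some `x`, then the scheme satisfies Shapiro's theorem. -/
lemma aux_shapiro_of_unbounded [CompleteSpace X]
    (A : ℕ → Set X) (K : ℕ → ℕ) (hA : IsApproximationScheme A K) (c : ℕ) (hc : 2 ≤ c)
    (hadd : ∀ n : ℕ, 1 ≤ n → ∀ x ∈ A n, ∀ y ∈ A n, x + y ∈ A (c * n))
    (r : ℝ) (hr : 0 < r) (x : X)
    (hx : ∀ M : ℝ, ∃ n : ℕ, 1 ≤ n ∧ M < (n : ℝ) ^ r * infDist x (A n)) :
    SatisfiesShapiro A := by
  intro ε hε hanti hε0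
  by_contra hcon
  push_neg at hcon
  have hmono : Monotone A := monotone_nat_of_le_succ hA.subset_succ
  -- a level from which on `0 ∈ A m`
  obtain ⟨a₀, ha₀⟩ := hA.dense_union.nonempty
  rw [Set.mem_iUnion] at ha₀
  obtain ⟨n₁, hn₁⟩ := ha₀
  have hz : (0 : X) ∈ A n₁ := by simpa using hA.smul_mem n₁ 0 a₀ hn₁
  set N₀ := n₁ + 1 with hN₀def
  have hN₀1 : 1 ≤ N₀ := Nat.le_add_left 1 n₁
  have h0 : ∀ m, N₀ ≤ m → (0 : X) ∈ A m :=
    fun m hm => hmono ((Nat.le_succ n₁).trans hm) hz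
  have hne : ∀ m, N₀ ≤ m → (A m).Nonempty := fun m hm => ⟨0, h0 m hm⟩
  -- Baire category argument
  have hclosed : ∀ j : ℕ, IsClosed {y : X | ∀ n, infDist y (A n) ≤ j * ε n} := by
    intro j
    have heq : {y : X | ∀ n, infDist y (A n) ≤ j * ε n}
        = ⋂ n, {y : X | infDist y (A n) ≤ j * ε n} := by
      ext y; simp [Set.mem_iInter]
    rw [heq]
    exact isClosed_iInter fun n => isClosed_le (continuous_infDist_pt _) continuous_const
  have hcover : ⋃ j : ℕ, {y : X | ∀ n, infDist y (A n) ≤ j * ε n} = Set.univ := by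
    ext y
    simp only [Set.mem_iUnion, Set.mem_univ, iff_true, Set.mem_setOf_eq]
    obtain ⟨M, hM⟩ := hcon y
    refine ⟨⌈max M 0⌉₊, fun n => (hM n).trans ?_⟩
    have hMle : M ≤ (⌈max M 0⌉₊ : ℝ) := (le_max_left M 0).trans (Nat.le_ceil _)
    exact mul_le_mul_of_nonneg_right hMle (hε n).le
  obtain ⟨j, hj⟩ := nonempty_interior_of_iUnion_of_closed hclosed hcover
  obtain ⟨x₀, hx₀⟩ := hj
  obtain ⟨δ, hδ, hball⟩ := Metric.isOpen_iff.1 isOpen_interior x₀ hx₀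
  have hx₀F : ∀ n, infDist x₀ (A n) ≤ j * ε n := interior_subset hx₀
  set C : ℝ := 4 * j / δ with hCdef
  have hC0 : 0 ≤ C := by positivity
  -- uniform estimate on all of X
  have hCsup : ∀ (y : X), ∀ n, N₀ ≤ n → infDist y (A (c * n)) ≤ C * ‖y‖ * ε n := by
    intro y n hn
    have hn1 : 1 ≤ n := hN₀1.trans hn
    have hcnN : N₀ ≤ c * n := hn.trans (Nat.le_mul_of_pos_left n (by omega))
    by_cases hy : y = 0
    · subst hy
      rw [infDist_zero_of_mem (h0 _ hcnN)]
      simp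
    · have hyn : ‖y‖ ≠ 0 := norm_ne_zero_iff.2 hy
      set u : X := ‖y‖⁻¹ • y with hudef
      have hu : ‖u‖ = 1 := by
        rw [hudef, norm_smul, norm_inv, norm_norm, inv_mul_cancel₀ hyn]
      set z : X := x₀ + (δ/2) • u with hzdef
      have hzball : z ∈ ball x₀ δ := by
        rw [mem_ball, dist_eq_norm]
        have : z - x₀ = (δ/2) • u := by rw [hzdef]; abel
        rw [this, norm_smul, hu, mul_one, Real.norm_eq_abs, abs_of_pos (by linarith)]
        linarith
      have hzF : ∀ m, infDist z (A m) ≤ j * ε m := interior_subset (hball hzball)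
      have hnegx₀ : infDist (-x₀) (A n) = infDist x₀ (A n) := by
        have := aux_infDist_smul (hA.smul_mem n) (t := -1) (by norm_num) x₀
        simpa using this
      have h1 : infDist ((δ/2) • u) (A (c * n)) ≤ 2 * j * ε n := by
        have hsum := aux_infDist_add (hne n hn) (hne n hn)
          (fun a ha b hb => hadd n hn1 a ha b hb) z (-x₀)
        have hzz : z + -x₀ = (δ/2) • u := by rw [hzdef]; abel
        rw [hzz] at hsum
        have := hzF n
        have := hx₀F n
        rw [hnegx₀] at hsum
        linarith
      have h2 : infDist ((δ/2) • u) (A (c * n)) = (δ/2) * infDist u (A (c * n)) := by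
        rw [aux_infDist_smul (hA.smul_mem _) (by positivity : (δ/2 : ℝ) ≠ 0) u,
          abs_of_pos (by linarith)]
      have h3 : infDist y (A (c * n)) = ‖y‖ * infDist u (A (c * n)) := by
        have hyu : y = ‖y‖ • u := by
          rw [hudef, smul_smul, mul_inv_cancel₀ hyn, one_smul]
        conv_lhs => rw [hyu]
        rw [aux_infDist_smul (hA.smul_mem _) hyn u, abs_of_nonneg (norm_nonneg y)]
      have hDle : infDist u (A (c * n)) ≤ C * ε n := by
        rw [h2] at h1
        rw [hCdef]
        rw [div_mul_eq_mul_div, le_div_iff₀ hδ]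
        nlinarith [infDist_nonneg (x := u) (s := A (c * n))]
      rw [h3]
      calc ‖y‖ * infDist u (A (c * n)) ≤ ‖y‖ * (C * ε n) :=
            mul_le_mul_of_nonneg_left hDle (norm_nonneg y)
        _ = C * ‖y‖ * ε n := by ring
  -- key contraction step
  have hkey : ∀ m, N₀ ≤ m →
      infDist x (A (c * (c * m))) ≤ (C * ε m) * infDist x (A m) := by
    intro m hm
    have hm1 : 1 ≤ m := hN₀1.trans hm
    have hcm : N₀ ≤ c * m := hm.trans (Nat.le_mul_of_pos_left m (by omega))
    have hcm1 : 1 ≤ c * m := hN₀1.trans hcm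
    have hstep : ∀ a ∈ A m, infDist x (A (c * (c * m))) ≤ (C * ε m) * dist x a := by
      intro a ha
      have hasub : a ∈ A (c * m) := hmono (Nat.le_mul_of_pos_left m (by omega)) ha
      have h1 : infDist x (A (c * (c * m))) ≤ infDist (x - a) (A (c * m)) :=
        aux_infDist_translate (hne _ hcm)
          (fun b hb => hadd (c * m) hcm1 a hasub b hb) x
      have h2 := hCsup (x - a) m hm
      rw [dist_eq_norm]
      calc infDist x (A (c * (c * m))) ≤ C * ‖x - a‖ * ε m := h1.trans h2
        _ = (C * ε m) * ‖x - a‖ := by ring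
    have hCε : 0 ≤ C * ε m := mul_nonneg hC0 (hε m).le
    refine le_of_forall_pos_le_add fun θ hθ => ?_
    have hden : (0:ℝ) < C * ε m + 1 := by linarith
    have hpos : 0 < θ / (C * ε m + 1) := by positivity
    obtain ⟨a, ha, hda⟩ := (infDist_lt_iff (hne m hm)).1
      (show infDist x (A m) < infDist x (A m) + θ / (C * ε m + 1) by linarith)
    have hle := (hstep a ha).trans (mul_le_mul_of_nonneg_left hda.le hCε)
    have hfrac : (C * ε m) * (θ / (C * ε m + 1)) ≤ θ := by
      rw [mul_div_assoc'] at *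
      rw [div_le_iff₀ hden]
      nlinarith
    nlinarith [hle]
  -- choose the starting level
  set d : ℝ := (c : ℝ)^2 with hddef
  have hc2 : (2:ℝ) ≤ (c:ℝ) := by exact_mod_cast hc
  have hd1 : (1:ℝ) < d := by rw [hddef]; nlinarith
  have hd0 : (0:ℝ) < d := by linarith
  set q : ℝ := d ^ (-r) with hqdef
  have hq0 : 0 < q := Real.rpow_pos_of_pos hd0 _
  have hev : ∀ᶠ m in atTop, ε m < q / (C + 1) :=
    hε0.eventually_lt_const (by positivity)
  obtain ⟨m₁, hm₁⟩ := eventually_atTop.1 hev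
  set m₀ := max m₁ N₀ with hm₀def
  have hm₀N : N₀ ≤ m₀ := le_max_right _ _
  have hm₀1 : 1 ≤ m₀ := hN₀1.trans hm₀N
  have hCq : C * ε m₀ ≤ q := by
    have h1 : ε m₀ < q / (C + 1) := hm₁ m₀ (le_max_left _ _)
    have h2 : ε m₀ * (C + 1) < q := (lt_div_iff₀ (by linarith)).1 h1
    nlinarith [(hε m₀).le]
  -- iterate
  have hmk : ∀ k : ℕ, m₀ ≤ (c ^ 2) ^ k * m₀ :=
    fun k => Nat.le_mul_of_pos_left m₀ (pow_pos (pow_pos (by omega) 2) k)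
  have hiter : ∀ k : ℕ,
      infDist x (A ((c ^ 2) ^ k * m₀)) ≤ q ^ k * infDist x (A m₀) := by
    intro k
    induction k with
    | zero => simp
    | succ k ih =>
      have hmkN : N₀ ≤ (c ^ 2) ^ k * m₀ := hm₀N.trans (hmk k)
      have hstep := hkey ((c ^ 2) ^ k * m₀) hmkN
      have hidx : c * (c * ((c ^ 2) ^ k * m₀)) = (c ^ 2) ^ (k + 1) * m₀ := by ring
      rw [hidx] at hstep
      have hCε' : C * ε ((c ^ 2) ^ k * m₀) ≤ q :=
        le_trans (mul_le_mul_of_nonneg_left (hanti (hmk k)) hC0) hCq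
      calc infDist x (A ((c ^ 2) ^ (k + 1) * m₀))
          ≤ (C * ε ((c ^ 2) ^ k * m₀)) * infDist x (A ((c ^ 2) ^ k * m₀)) := hstep
        _ ≤ q * (q ^ k * infDist x (A m₀)) :=
            mul_le_mul hCε' ih infDist_nonneg hq0.le
        _ = q ^ (k + 1) * infDist x (A m₀) := by ring
  -- derive the bound contradicting hx
  set E₀ : ℝ := infDist x (A m₀) with hE₀def
  have hE₀0 : 0 ≤ E₀ := infDist_nonneg
  have hrange : (Finset.range (m₀ + 1)).Nonempty :=
    Finset.nonempty_range_iff.2 (Nat.succ_ne_zero m₀)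
  set B₁ : ℝ := (Finset.range (m₀ + 1)).sup' hrange
    (fun n => ((n : ℝ)) ^ r * infDist x (A n)) with hB₁def
  set B₂ : ℝ := d ^ r * ((m₀ : ℝ)) ^ r * E₀ with hB₂def
  obtain ⟨n, hn1, hnB⟩ := hx (max B₁ B₂)
  have hbound : (n : ℝ) ^ r * infDist x (A n) ≤ max B₁ B₂ := by
    by_cases hcase : n ≤ m₀
    · refine le_max_of_le_left ?_
      rw [hB₁def]
      exact Finset.le_sup' (fun n : ℕ => ((n : ℝ)) ^ r * infDist x (A n))
        (Finset.mem_range.2 (Nat.lt_succ_of_le hcase))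
    · push_neg at hcase
      have hnm : m₀ ≤ n := hcase.le
      have hexk : ∃ k, n < (c ^ 2) ^ (k + 1) * m₀ := by
        refine ⟨n, ?_⟩
        calc n < 2 ^ n := Nat.lt_two_pow_self
          _ ≤ 2 ^ (n + 1) := Nat.pow_le_pow_right (by omega) (by omega)
          _ ≤ (c ^ 2) ^ (n + 1) := Nat.pow_le_pow_left (by nlinarith) _
          _ ≤ (c ^ 2) ^ (n + 1) * m₀ := Nat.le_mul_of_pos_right _ hm₀1
      set k := Nat.find hexk with hkdef
      have hk1 : n < (c ^ 2) ^ (k + 1) * m₀ := Nat.find_spec hexk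
      have hk2 : (c ^ 2) ^ k * m₀ ≤ n := by
        rcases Nat.eq_zero_or_pos k with h | h
        · rw [h]; simpa using hnm
        · have h' := Nat.find_min hexk (show k - 1 < k by omega)
          rw [Nat.sub_add_cancel h] at h'
          exact Nat.le_of_not_lt h'
      have hEn : infDist x (A n) ≤ q ^ k * E₀ :=
        (infDist_le_infDist_of_subset (hmono hk2) (hne _ (hm₀N.trans (hmk k)))).trans
          (hiter k)
      have hnr : ((n : ℝ)) ^ r ≤ ((d ^ (k + 1)) * (m₀ : ℝ)) ^ r := by
        apply Real.rpow_le_rpow (Nat.cast_nonneg n) _ hr.le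
        have := hk1.le
        rw [hddef]
        exact_mod_cast this
      have hkey2 : ((d ^ (k + 1) : ℝ)) ^ r * q ^ k = d ^ r := by
        rw [hqdef]
        rw [← Real.rpow_natCast d (k + 1), ← Real.rpow_natCast (d ^ (-r)) k,
          ← Real.rpow_mul hd0.le, ← Real.rpow_mul hd0.le, ← Real.rpow_add hd0]
        congr 1
        push_cast
        ring
      calc (n : ℝ) ^ r * infDist x (A n)
          ≤ ((d ^ (k + 1)) * (m₀ : ℝ)) ^ r * (q ^ k * E₀) :=
            mul_le_mul hnr hEn infDist_nonneg (Real.rpow_nonneg (by positivity) _)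
        _ = B₂ := by
            rw [Real.mul_rpow (by positivity) (Nat.cast_nonneg m₀), hB₂def]
            rw [← hkey2]
            ring
        _ ≤ max B₁ B₂ := le_max_right _ _
  exact absurd hnB (not_lt.2 hbound)

/-- The easy implication: Shapiro's theorem gives unboundedness for every `r > 0`. -/
lemma aux_unbounded_of_shapiro (A : ℕ → Set X) (hS : SatisfiesShapiro A)
    (r : ℝ) (hr : 0 < r) :
    ∃ x : X, ∀ M : ℝ, ∃ n : ℕ, 1 ≤ n ∧ M < (n : ℝ) ^ r * infDist x (A n) := by
  have hεpos : ∀ n : ℕ, (0 : ℝ) < ((n : ℝ) + 1) ^ (-r) :=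
    fun n => Real.rpow_pos_of_pos (by positivity) _
  have hεanti : Antitone (fun n : ℕ => ((n : ℝ) + 1) ^ (-r)) := by
    intro a b hab
    dsimp only
    rw [Real.rpow_neg (by positivity), Real.rpow_neg (by positivity)]
    apply inv_anti₀ (Real.rpow_pos_of_pos (by positivity) _)
    apply Real.rpow_le_rpow (by positivity) (by exact_mod_cast by omega) hr.le
  have hεtend : Tendsto (fun n : ℕ => ((n : ℝ) + 1) ^ (-r)) atTop (nhds 0) := by
    apply (tendsto_rpow_neg_atTop hr).comp
    exact tendsto_atTop_add_const_right atTop 1 tendsto_natCast_atTop_atTop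
  obtain ⟨x, hx⟩ := hS _ hεpos hεanti hεtend
  refine ⟨x, fun M => ?_⟩
  by_contra hcon
  push_neg at hcon
  apply hx
  set M' : ℝ := max ((2 : ℝ) ^ r * max M 0) (infDist x (A 0)) with hM'def
  refine ⟨M', fun n => ?_⟩
  rcases Nat.eq_zero_or_pos n with h | h
  · subst h
    simp only [Nat.cast_zero, zero_add, Real.one_rpow, mul_one]
    exact le_max_right _ _
  · have hn0 : (0 : ℝ) < (n : ℝ) := by exact_mod_cast h
    have hn1' : (1 : ℝ) ≤ (n : ℝ) := by exact_mod_cast h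
    have hEle : (n : ℝ) ^ r * infDist x (A n) ≤ max M 0 :=
      (hcon n h).trans (le_max_left _ _)
    have hstep : ((n : ℝ) + 1) ^ r * infDist x (A n) ≤ M' := by
      have h21 : ((n : ℝ) + 1) ^ r ≤ (2 * (n : ℝ)) ^ r :=
        Real.rpow_le_rpow (by positivity) (by linarith [hn1']) hr.le
      have h22 : ((2 : ℝ) * (n : ℝ)) ^ r = 2 ^ r * (n : ℝ) ^ r :=
        Real.mul_rpow (by norm_num) hn0.le
      have h23 : ((n : ℝ) + 1) ^ r * infDist x (A n)
          ≤ 2 ^ r * ((n : ℝ) ^ r * infDist x (A n)) := by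
        rw [← mul_assoc, ← h22]
        exact mul_le_mul_of_nonneg_right h21 infDist_nonneg
      have h24 : 2 ^ r * ((n : ℝ) ^ r * infDist x (A n)) ≤ 2 ^ r * max M 0 :=
        mul_le_mul_of_nonneg_left hEle (Real.rpow_nonneg (by norm_num) _)
      exact h23.trans (h24.trans (le_max_left _ _))
    have hpos : (0 : ℝ) < ((n : ℝ) + 1) ^ r := Real.rpow_pos_of_pos (by positivity) _
    rw [Real.rpow_neg (by positivity), ← div_eq_mul_inv, le_div_iff₀ hpos]
    calc infDist x (A n) * ((n : ℝ) + 1) ^ r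
        = ((n : ℝ) + 1) ^ r * infDist x (A n) := by ring
      _ ≤ M' := hstep

/-- Equivalence between the `n^r`-form and the `(n+1)^r`-set form. -/
lemma aux_forms_iff (A : ℕ → Set X) (r : ℝ) (hr : 0 < r) :
    (∃ x : X, ∀ M : ℝ, ∃ n : ℕ, 1 ≤ n ∧ M < (n : ℝ) ^ r * infDist x (A n)) ↔
    {x : X | ∃ M : ℝ, ∀ n : ℕ, ((n : ℝ) + 1) ^ r * infDist x (A n) ≤ M} ≠ Set.univ := by
  rw [Set.ne_univ_iff_exists_notMem]
  constructor
  · rintro ⟨x, hx⟩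
    refine ⟨x, ?_⟩
    rintro ⟨M, hM⟩
    obtain ⟨n, hn1, hlt⟩ := hx M
    have hle : (n : ℝ) ^ r * infDist x (A n) ≤ ((n : ℝ) + 1) ^ r * infDist x (A n) :=
      mul_le_mul_of_nonneg_right
        (Real.rpow_le_rpow (Nat.cast_nonneg n) (by linarith) hr.le) infDist_nonneg
    linarith [hM n]
  · rintro ⟨x, hx⟩
    refine ⟨x, fun M => ?_⟩
    by_contra hcon
    push_neg at hcon
    apply hx
    set M' : ℝ := max ((2 : ℝ) ^ r * max M 0) (infDist x (A 0)) with hM'def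
    refine ⟨M', fun n => ?_⟩
    rcases Nat.eq_zero_or_pos n with h | h
    · subst h
      simp only [Nat.cast_zero, zero_add, Real.one_rpow, one_mul]
      exact le_max_right _ _
    · have hn0 : (0 : ℝ) < (n : ℝ) := by exact_mod_cast h
      have hn1' : (1 : ℝ) ≤ (n : ℝ) := by exact_mod_cast h
      have hEle : (n : ℝ) ^ r * infDist x (A n) ≤ max M 0 :=
        (hcon n h).trans (le_max_left _ _)
      have h21 : ((n : ℝ) + 1) ^ r ≤ (2 * (n : ℝ)) ^ r :=
        Real.rpow_le_rpow (by positivity) (by linarith [hn1']) hr.le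
      have h22 : ((2 : ℝ) * (n : ℝ)) ^ r = 2 ^ r * (n : ℝ) ^ r :=
        Real.mul_rpow (by norm_num) hn0.le
      have h23 : ((n : ℝ) + 1) ^ r * infDist x (A n)
          ≤ 2 ^ r * ((n : ℝ) ^ r * infDist x (A n)) := by
        rw [← mul_assoc, ← h22]
        exact mul_le_mul_of_nonneg_right h21 infDist_nonneg
      have h24 : 2 ^ r * ((n : ℝ) ^ r * infDist x (A n)) ≤ 2 ^ r * max M 0 :=
        mul_le_mul_of_nonneg_left hEle (Real.rpow_nonneg (by norm_num) _)
      exact h23.trans (h24.trans (le_max_left _ _))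

end Aux

theorem stmt15 {X : Type*} [NormedAddCommGroup X] [NormedSpace ℝ X] [CompleteSpace X]
    (hX : ¬ FiniteDimensional ℝ X) (A : ℕ → Set X) (K : ℕ → ℕ)
    (hA : IsApproximationScheme A K) (c : ℕ) (hc : 2 ≤ c)
    (hadd : ∀ n : ℕ, 1 ≤ n → ∀ x ∈ A n, ∀ y ∈ A n, x + y ∈ A (c * n)) :
    (SatisfiesShapiro A ↔
      ∀ r : ℝ, 0 < r → ∃ x : X, ∀ M : ℝ, ∃ n : ℕ, 1 ≤ n ∧
        M < (n : ℝ) ^ r * infDist x (A n)) ∧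
    (SatisfiesShapiro A ↔
      ∃ r : ℝ, 0 < r ∧ ∃ x : X, ∀ M : ℝ, ∃ n : ℕ, 1 ≤ n ∧
        M < (n : ℝ) ^ r * infDist x (A n)) ∧
    (SatisfiesShapiro A ↔
      ∀ r : ℝ, 0 < r →
        {x : X | ∃ M : ℝ, ∀ n : ℕ, ((n : ℝ) + 1) ^ r * infDist x (A n) ≤ M} ≠ Set.univ) ∧
    (SatisfiesShapiro A ↔
      ∃ r : ℝ, 0 < r ∧
        {x : X | ∃ M : ℝ, ∀ n : ℕ, ((n : ℝ) + 1) ^ r * infDist x (A n) ≤ M} ≠ Set.univ) := by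
  have hard : ∀ r : ℝ, 0 < r →
      (∃ x : X, ∀ M : ℝ, ∃ n : ℕ, 1 ≤ n ∧ M < (n : ℝ) ^ r * infDist x (A n)) →
      SatisfiesShapiro A := by
    rintro r hr ⟨x, hx⟩
    exact aux_shapiro_of_unbounded A K hA c hc hadd r hr x hx
  have easy : SatisfiesShapiro A → ∀ r : ℝ, 0 < r →
      ∃ x : X, ∀ M : ℝ, ∃ n : ℕ, 1 ≤ n ∧ M < (n : ℝ) ^ r * infDist x (A n) :=
    fun h r hr => aux_unbounded_of_shapiro A h r hr
  refine ⟨⟨fun h r hr => easy h r hr, fun h => hard 1 one_pos (h 1 one_pos)⟩,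
    ⟨fun h => ⟨1, one_pos, easy h 1 one_pos⟩, fun ⟨r, hr, h⟩ => hard r hr h⟩,
    ⟨fun h r hr => (aux_forms_iff A r hr).1 (easy h r hr),
      fun h => hard 1 one_pos ((aux_forms_iff A 1 one_pos).2 (h 1 one_pos))⟩,
    ⟨fun h => ⟨1, one_pos, (aux_forms_iff A 1 one_pos).1 (easy h 1 one_pos)⟩,
      fun ⟨r, hr, h⟩ => hard r hr ((aux_forms_iff A r hr).2 h)⟩⟩
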